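/- Let β > 0, λ > 0 and μ ∈ ℝ. Then: (i) for every t ∈ ℝ the function (x, y) ↦ exp(β((μ−1)·(x² + y²) − λ·(x² + y²)² + 2·t·x)) is integrable on ℝ²; and (ii) there exist constants c > 0 and T ≥ 1 such that for all t ≥ T, Real.log (∫_{ℝ²} exp(β((μ−1)·(x² + y²) − λ·(x² + y²)² + 2·t·x)) dx dy) ≥ c · t^{4/3}. (This is the lower-bound half of the growth estimate p̃(ν) ∼ |ν|^{4/3} in the paper's Lemma 5(ii), obtained from the Berezin–Lieb bound Tr e^{−H(ν)} ≥ ∫ (dz dz̄/π) e^{−⟨z|H(ν)|z⟩} evaluated on coherent states.) -/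

import Mathlib

set_option maxHeartbeats 1000000

open MeasureTheory

/-- **Lower bound half of the growth estimate `p̃(ν) ∼ |ν|^{4/3}`** (Lemma 5(ii)),
via the Berezin–Lieb inequality on coherent states. For `β > 0`, `λ > 0`, `μ ∈ ℝ`:
(i) for every `t` the function
`(x, y) ↦ exp(β((μ−1)(x²+y²) − λ(x²+y²)² + 2tx))` is integrable on `ℝ²`, and
(ii) there are `c > 0` and `T ≥ 1` with
`log ∫ exp(β((μ−1)(x²+y²) − λ(x²+y²)² + 2tx)) ≥ c t^{4/3}` for all `t ≥ T`. -/
theorem log_coherent_state_integral_lower_bound (β lam μ : ℝ) (hβ : 0 < β) (hlam : 0 < lam) :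
    (∀ t : ℝ, Integrable (fun p : ℝ × ℝ =>
      Real.exp (β * ((μ - 1) * (p.1 ^ 2 + p.2 ^ 2) - lam * (p.1 ^ 2 + p.2 ^ 2) ^ 2
        + 2 * t * p.1))) volume) ∧
    (∃ c : ℝ, 0 < c ∧ ∃ T : ℝ, 1 ≤ T ∧ ∀ t : ℝ, T ≤ t →
      c * t ^ ((4 : ℝ) / 3) ≤
        Real.log (∫ p : ℝ × ℝ,
          Real.exp (β * ((μ - 1) * (p.1 ^ 2 + p.2 ^ 2) - lam * (p.1 ^ 2 + p.2 ^ 2) ^ 2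
            + 2 * t * p.1)))) := by
  have hint : ∀ t : ℝ, Integrable (fun p : ℝ × ℝ =>
      Real.exp (β * ((μ - 1) * (p.1 ^ 2 + p.2 ^ 2) - lam * (p.1 ^ 2 + p.2 ^ 2) ^ 2
        + 2 * t * p.1))) volume := by
    intro t
    have hcont : Continuous fun p : ℝ × ℝ =>
        Real.exp (β * ((μ - 1) * (p.1 ^ 2 + p.2 ^ 2) - lam * (p.1 ^ 2 + p.2 ^ 2) ^ 2
          + 2 * t * p.1)) := by continuity
    set C : ℝ := β ^ 2 * t ^ 2 + (β * (μ - 1) + 2) ^ 2 / (4 * β * lam) with hC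
    have hg : Integrable (fun p : ℝ × ℝ =>
        Real.exp C * (Real.exp (-p.1 ^ 2) * Real.exp (-p.2 ^ 2))) volume := by
      have h1 : Integrable (fun x : ℝ => Real.exp (-x ^ 2)) volume := by
        have := integrable_exp_neg_mul_sq (b := (1 : ℝ)) one_pos
        simpa using this
      exact (h1.mul_prod h1).const_mul _
    refine hg.mono' hcont.aestronglyMeasurable (Filter.Eventually.of_forall fun p => ?_)
    rw [Real.norm_eq_abs, Real.abs_exp]
    have hs0 : (0:ℝ) ≤ p.1 ^ 2 + p.2 ^ 2 := by positivity
    have h2 : 2 * β * t * p.1 ≤ β ^ 2 * t ^ 2 + p.1 ^ 2 := by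
      nlinarith [sq_nonneg (β * t - p.1)]
    have h3 : (β * (μ - 1) + 2) * (p.1 ^ 2 + p.2 ^ 2) ≤
        β * lam * (p.1 ^ 2 + p.2 ^ 2) ^ 2 + (β * (μ - 1) + 2) ^ 2 / (4 * β * lam) := by
      rw [← sub_le_iff_le_add', le_div_iff₀ (by positivity)]
      nlinarith [sq_nonneg (2 * β * lam * (p.1 ^ 2 + p.2 ^ 2) - (β * (μ - 1) + 2))]
    have key : β * ((μ - 1) * (p.1 ^ 2 + p.2 ^ 2) - lam * (p.1 ^ 2 + p.2 ^ 2) ^ 2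
        + 2 * t * p.1) ≤ C - (p.1 ^ 2 + p.2 ^ 2) := by
      rw [hC]; nlinarith [sq_nonneg p.2]
    calc Real.exp (β * ((μ - 1) * (p.1 ^ 2 + p.2 ^ 2) - lam * (p.1 ^ 2 + p.2 ^ 2) ^ 2
          + 2 * t * p.1)) ≤ Real.exp (C - (p.1 ^ 2 + p.2 ^ 2)) := Real.exp_le_exp.2 key
      _ = Real.exp C * (Real.exp (-p.1 ^ 2) * Real.exp (-p.2 ^ 2)) := by
          rw [← Real.exp_add, ← Real.exp_add]; ring_nf
  refine ⟨hint, ?_⟩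
  -- choose ε
  set ε : ℝ := min 1 (1 / (1 + 25 * lam)) with hε
  have hε0 : 0 < ε := lt_min one_pos (by positivity)
  have hε1 : ε ≤ 1 := min_le_left _ _
  have hεd : ε * (1 + 25 * lam) ≤ 1 := by
    have h := min_le_right (1:ℝ) (1 / (1 + 25 * lam))
    rw [hε]
    calc min 1 (1 / (1 + 25 * lam)) * (1 + 25 * lam)
        ≤ (1 / (1 + 25 * lam)) * (1 + 25 * lam) := by
          apply mul_le_mul_of_nonneg_right h (by positivity)
      _ = 1 := by field_simp
  have hεcube : 25 * lam * ε ^ 3 ≤ 1 := by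
    have h1 : ε ^ 3 ≤ ε := by
      calc ε ^ 3 ≤ ε ^ 1 := pow_le_pow_of_le_one hε0.le hε1 (by norm_num)
        _ = ε := pow_one ε
    have h2 : 25 * lam * ε ^ 3 ≤ 25 * lam * ε :=
      mul_le_mul_of_nonneg_left h1 (by positivity)
    nlinarith [hε0.le, hlam.le, h2, hεd]
  clear_value ε
  set M : ℝ := |μ - 1| with hM
  have hM0 : 0 ≤ M := abs_nonneg _
  have hMl : -M ≤ μ - 1 := neg_abs_le _
  clear_value M
  set q : ℝ := 1 + 1 / ε + 10 * M / ε with hq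
  have hq1 : 1 ≤ q := by
    have h1 : 0 ≤ 1 / ε := by positivity
    have h2 : 0 ≤ 10 * M / ε := by positivity
    rw [hq]; linarith
  have hq0 : 0 < q := lt_of_lt_of_le one_pos hq1
  have hq3 : (1:ℝ) ≤ q ^ 3 := by nlinarith [sub_nonneg.2 hq1, sq_nonneg (q - 1)]
  clear_value q
  refine ⟨β * ε / 2, by positivity, q ^ 3, hq3, ?_⟩
  intro t ht
  have hT1 : (1:ℝ) ≤ q ^ 3 := hq3
  have ht0 : 0 < t := lt_of_lt_of_le one_pos (le_trans hT1 ht)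
  set s : ℝ := t ^ ((1:ℝ)/3) with hsdef
  have hs0 : 0 < s := Real.rpow_pos_of_pos ht0 _
  have hsq : q ≤ s := by
    have h1 : (q ^ 3 : ℝ) ^ ((1:ℝ)/3) ≤ t ^ ((1:ℝ)/3) :=
      Real.rpow_le_rpow (by positivity) ht (by norm_num)
    have h2 : (q ^ 3 : ℝ) ^ ((1:ℝ)/3) = q := by
      rw [← Real.rpow_natCast q 3, ← Real.rpow_mul hq0.le]
      norm_num
    rw [hsdef]; rw [h2] at h1; exact h1
  have hs1 : 1 ≤ s := le_trans hq1 hsq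
  have ht43 : t ^ ((4:ℝ)/3) = s ^ 4 := by
    rw [hsdef, ← Real.rpow_natCast (t ^ ((1:ℝ)/3)) 4, ← Real.rpow_mul ht0.le]
    norm_num
  have hts : t = s ^ 3 := by
    rw [hsdef, ← Real.rpow_natCast (t ^ ((1:ℝ)/3)) 3, ← Real.rpow_mul ht0.le]
    norm_num
  clear_value s
  set a : ℝ := ε * s with ha
  have ha1 : 1 ≤ a := by
    have h1 : 1 / ε ≤ s := by
      have h2 : (0:ℝ) ≤ 10 * M / ε := by positivity
      have h3 : 1 / ε ≤ q := by rw [hq]; linarith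
      exact le_trans h3 hsq
    rw [ha]
    calc (1:ℝ) = ε * (1/ε) := by field_simp
      _ ≤ ε * s := mul_le_mul_of_nonneg_left h1 hε0.le
  have hMs : 10 * M ≤ ε * s := by
    have h1 : 10 * M / ε ≤ s := by
      have h2 : (0:ℝ) ≤ 1 / ε := by positivity
      have h3 : 10 * M / ε ≤ q := by rw [hq]; linarith
      exact le_trans h3 hsq
    calc 10 * M = ε * (10 * M / ε) := by field_simp
      _ ≤ ε * s := mul_le_mul_of_nonneg_left h1 hε0.le
  clear_value a
  -- lower bound on the integrand over the box
  have hptwise : ∀ p : ℝ × ℝ, p ∈ Set.Icc a (a+1) ×ˢ Set.Icc (0:ℝ) 1 →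
      Real.exp (β * ε / 2 * t ^ ((4:ℝ)/3)) ≤
        Real.exp (β * ((μ - 1) * (p.1 ^ 2 + p.2 ^ 2) - lam * (p.1 ^ 2 + p.2 ^ 2) ^ 2
          + 2 * t * p.1)) := by
    rintro ⟨x, y⟩ ⟨⟨hx1, hx2⟩, hy1, hy2⟩
    simp only
    rw [ht43]
    apply Real.exp_le_exp.2
    have hu0 : (0:ℝ) ≤ x ^ 2 + y ^ 2 := by positivity
    have hu : x ^ 2 + y ^ 2 ≤ 5 * a ^ 2 := by
      linarith [mul_nonneg (by linarith : (0:ℝ) ≤ a + 1 - x) (by linarith : (0:ℝ) ≤ a + 1 + x),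
        mul_nonneg (by linarith : (0:ℝ) ≤ 1 - y) (by linarith : (0:ℝ) ≤ 1 + y),
        mul_nonneg (by linarith : (0:ℝ) ≤ 3 * a + 1) (by linarith : (0:ℝ) ≤ a - 1),
        mul_nonneg (by linarith : (0:ℝ) ≤ a - 1) (by linarith : (0:ℝ) ≤ a + 1)]
    have h_a : -(M * (5 * a ^ 2)) ≤ (μ - 1) * (x ^ 2 + y ^ 2) := by
      linarith [mul_le_mul_of_nonneg_right hMl hu0, mul_le_mul_of_nonneg_left hu hM0]
    have h_b : lam * (x ^ 2 + y ^ 2) ^ 2 ≤ lam * (5 * a ^ 2) ^ 2 :=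
      mul_le_mul_of_nonneg_left (pow_le_pow_left₀ hu0 hu 2) hlam.le
    have h_c : 2 * (s ^ 3) * a ≤ 2 * (s ^ 3) * x :=
      mul_le_mul_of_nonneg_left hx1 (by positivity)
    -- rewrite a = ε s and collect
    have hd : 25 * lam * ε ^ 4 * s ^ 4 ≤ ε * s ^ 4 := by
      linarith [mul_le_mul_of_nonneg_right hεcube
        (by positivity : (0:ℝ) ≤ ε * s ^ 4)]
    have he : 5 * M * ε ^ 2 * s ^ 2 ≤ ε / 2 * s ^ 4 := by
      have h1 : 10 * M * (ε ^ 2 * s ^ 2) ≤ ε * s * (ε ^ 2 * s ^ 2) :=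
        mul_le_mul_of_nonneg_right hMs (by positivity)
      have h2 : ε ^ 2 ≤ 1 := by
        have := mul_le_one₀ hε1 hε0.le hε1
        nlinarith [this]
      linarith [mul_le_mul_of_nonneg_right h2 (by positivity : (0:ℝ) ≤ ε * s ^ 3),
        mul_le_mul_of_nonneg_left hs1 (by positivity : (0:ℝ) ≤ ε * s ^ 3), h1]
    have inner : ε / 2 * s ^ 4 ≤
        (μ - 1) * (x ^ 2 + y ^ 2) - lam * (x ^ 2 + y ^ 2) ^ 2 + 2 * t * x := by
      rw [hts]
      have ha2 : a ^ 2 = ε ^ 2 * s ^ 2 := by rw [ha]; ring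
      have ha4 : lam * (5 * a ^ 2) ^ 2 = 25 * lam * ε ^ 4 * s ^ 4 := by rw [ha]; ring
      have hc2 : 2 * (s ^ 3) * a = 2 * ε * s ^ 4 := by rw [ha]; ring
      have ha4' : lam * (5 * a ^ 2) ^ 2 = 25 * lam * ε ^ 4 * s ^ 4 := ha4
      have ha5 : M * (5 * a ^ 2) = 5 * M * ε ^ 2 * s ^ 2 := by rw [ha]; ring
      linarith [h_a, h_b, h_c, hd, he, ha4', hc2, ha5]
    calc β * ε / 2 * s ^ 4 = β * (ε / 2 * s ^ 4) := by ring
      _ ≤ β * ((μ - 1) * (x ^ 2 + y ^ 2) - lam * (x ^ 2 + y ^ 2) ^ 2 + 2 * t * x) :=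
        mul_le_mul_of_nonneg_left inner hβ.le
  set S : Set (ℝ × ℝ) := Set.Icc a (a+1) ×ˢ Set.Icc (0:ℝ) 1 with hSdef
  have hSm : MeasurableSet S := measurableSet_Icc.prod measurableSet_Icc
  have hvol : volume S = 1 := by
    rw [hSdef, MeasureTheory.Measure.volume_eq_prod, MeasureTheory.Measure.prod_prod]
    simp [Real.volume_Icc]
  have hset : Real.exp (β * ε / 2 * t ^ ((4:ℝ)/3)) * (volume S).toReal ≤
      ∫ p in S, Real.exp (β * ((μ - 1) * (p.1 ^ 2 + p.2 ^ 2)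
        - lam * (p.1 ^ 2 + p.2 ^ 2) ^ 2 + 2 * t * p.1)) := by
    have h := MeasureTheory.setIntegral_ge_of_const_le hSm (by rw [hvol]; exact ENNReal.one_ne_top)
      hptwise ((hint t).integrableOn)
    rw [smul_eq_mul, mul_comm] at h; exact h
  rw [hvol] at hset
  simp only [ENNReal.toReal_one, mul_one] at hset
  have hle2 : (∫ p in S, Real.exp (β * ((μ - 1) * (p.1 ^ 2 + p.2 ^ 2)
        - lam * (p.1 ^ 2 + p.2 ^ 2) ^ 2 + 2 * t * p.1))) ≤
      ∫ p : ℝ × ℝ, Real.exp (β * ((μ - 1) * (p.1 ^ 2 + p.2 ^ 2)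
        - lam * (p.1 ^ 2 + p.2 ^ 2) ^ 2 + 2 * t * p.1)) :=
    MeasureTheory.setIntegral_le_integral (hint t)
      (Filter.Eventually.of_forall fun p => (Real.exp_pos _).le)
  have hfinal : Real.exp (β * ε / 2 * t ^ ((4:ℝ)/3)) ≤
      ∫ p : ℝ × ℝ, Real.exp (β * ((μ - 1) * (p.1 ^ 2 + p.2 ^ 2)
        - lam * (p.1 ^ 2 + p.2 ^ 2) ^ 2 + 2 * t * p.1)) := le_trans hset hle2
  calc β * ε / 2 * t ^ ((4:ℝ)/3)
      = Real.log (Real.exp (β * ε / 2 * t ^ ((4:ℝ)/3))) := (Real.log_exp _).symm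
    _ ≤ _ := Real.log_le_log (Real.exp_pos _) hfinal
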